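/- For the circular transform R (integration over unit circles in ℝ²), the normal operator R*R is convolution against the explicit kernel K(x,y) = 4/(r√(4−r²)) for r = |x−y| < 2 and 0 for r ≥ 2; i.e., R*Rf(x) = ∫_{|x−y|<2} 4 f(y)/(|x−y|√(4−|x−y|²)) dy. -/

import Mathlib

open MeasureTheory Real

/-- The unit vector `(cos α, sin α)` in `ℝ²`. -/
noncomputable def unitVec (α : ℝ) : EuclideanSpace ℝ (Fin 2) :=
  (EuclideanSpace.equiv (Fin 2) ℝ).symm ![Real.cos α, Real.sin α]

namespace CircleRadonAux

open Set

lemma unitVec_apply (α : ℝ) (i : Fin 2) : unitVec α i = ![Real.cos α, Real.sin α] i := rfl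

lemma norm_unitVec (α : ℝ) : ‖unitVec α‖ = 1 := by
  rw [EuclideanSpace.norm_eq]
  simp [unitVec_apply, Fin.sum_univ_two]

lemma unitVec_periodic : Function.Periodic unitVec (2 * π) := by
  intro α
  apply PiLp.ext
  intro i
  fin_cases i <;> simp [unitVec_apply, Real.cos_add_two_pi, Real.sin_add_two_pi]

lemma unitVec_add_pi (α : ℝ) : unitVec (α + π) = -unitVec α := by
  apply PiLp.ext
  intro i
  fin_cases i <;> simp [unitVec_apply, Real.cos_add_pi, Real.sin_add_pi]

lemma unitVec_add_unitVec (α φ : ℝ) :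
    unitVec α + unitVec (α + φ) = (2 * Real.cos (φ / 2)) • unitVec (α + φ / 2) := by
  apply PiLp.ext
  intro i
  have h1 : Real.cos α + Real.cos (α + φ) = 2 * Real.cos (φ/2) * Real.cos (α + φ/2) := by
    have := Real.cos_sub (α + φ/2) (φ/2)
    have := Real.cos_add (α + φ/2) (φ/2)
    rw [show (α + φ/2) - φ/2 = α by ring] at *
    rw [show (α + φ/2) + φ/2 = α + φ by ring] at *
    linarith
  have h2 : Real.sin α + Real.sin (α + φ) = 2 * Real.cos (φ/2) * Real.sin (α + φ/2) := by
    have := Real.sin_sub (α + φ/2) (φ/2)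
    have := Real.sin_add (α + φ/2) (φ/2)
    rw [show (α + φ/2) - φ/2 = α by ring] at *
    rw [show (α + φ/2) + φ/2 = α + φ by ring] at *
    linarith
  fin_cases i <;> simp [unitVec_apply, PiLp.smul_apply, smul_eq_mul] <;> linarith

lemma continuous_unitVec : Continuous unitVec := by
  apply Continuous.comp (ContinuousLinearEquiv.continuous _)
  apply continuous_pi
  intro i; fin_cases i <;> simp <;> fun_prop

/-- The map `φ ↦ 2 cos (φ/2)`. -/
noncomputable def cc (φ : ℝ) : ℝ := 2 * Real.cos (φ / 2)

lemma continuous_cc : Continuous cc := by unfold cc; fun_prop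

lemma cc_hasDerivAt (φ : ℝ) : HasDerivAt cc (-Real.sin (φ / 2)) φ := by
  have h1 : HasDerivAt (fun ψ : ℝ => ψ / 2) (1 / 2) φ := (hasDerivAt_id φ).div_const 2
  have h2 := (Real.hasDerivAt_cos (φ / 2)).comp φ h1
  have h3 := h2.const_mul (2 : ℝ)
  rw [show -Real.sin (φ / 2) = 2 * (-Real.sin (φ / 2) * (1 / 2)) by ring]
  exact h3

lemma cc_strictAntiOn : StrictAntiOn cc (Icc 0 (2 * π)) := by
  intro a ha b hb hab
  have hπ := Real.pi_pos
  apply mul_lt_mul_of_pos_left _ (by norm_num : (0:ℝ) < 2)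
  apply Real.cos_lt_cos_of_nonneg_of_le_pi (by linarith [ha.1]) (by linarith [hb.2]) (by linarith)

lemma cc_image {a b : ℝ} (ha : 0 ≤ a) (hb : b ≤ 2 * π) (hab : a < b) :
    cc '' Ioo a b = Ioo (cc b) (cc a) := by
  have hπ := Real.pi_pos
  ext r
  constructor
  · rintro ⟨φ, ⟨h1, h2⟩, rfl⟩
    exact ⟨cc_strictAntiOn ⟨by linarith, by linarith⟩ ⟨by linarith, hb⟩ h2,
      cc_strictAntiOn ⟨ha, by linarith⟩ ⟨by linarith, by linarith⟩ h1⟩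
  · rintro ⟨h1, h2⟩
    simp only [cc] at h1 h2 ⊢
    have hm2 : -2 ≤ r := le_trans (by nlinarith [Real.neg_one_le_cos (b / 2)]) h1.le
    have hp2 : r ≤ 2 := le_trans h2.le (by nlinarith [Real.cos_le_one (a / 2)])
    have hr1 : -1 ≤ r / 2 := by linarith
    have hr2 : r / 2 ≤ 1 := by linarith
    refine ⟨2 * Real.arccos (r / 2), ⟨?_, ?_⟩, ?_⟩
    · by_contra h
      push_neg at h
      have := Real.cos_le_cos_of_nonneg_of_le_pi (x := Real.arccos (r / 2)) (y := a / 2)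
        (Real.arccos_nonneg _) (by linarith) (by linarith)
      rw [Real.cos_arccos hr1 hr2] at this
      linarith
    · by_contra h
      push_neg at h
      have := Real.cos_le_cos_of_nonneg_of_le_pi (x := b / 2) (y := Real.arccos (r / 2))
        (by linarith) (Real.arccos_le_pi _) (by linarith)
      rw [Real.cos_arccos hr1 hr2] at this
      linarith
    · show 2 * Real.cos (2 * Real.arccos (r / 2) / 2) = r
      rw [mul_div_cancel_left₀ _ (by norm_num : (2:ℝ) ≠ 0), Real.cos_arccos hr1 hr2]
      ring

lemma cc_injOn : InjOn cc (Ioo 0 (2 * π)) :=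
  (cc_strictAntiOn.mono (Ioo_subset_Icc_self)).injOn

lemma cc_deriv_within {s : Set ℝ} :
    ∀ φ ∈ s, HasDerivWithinAt cc (-Real.sin (φ / 2)) s φ :=
  fun φ _ => (cc_hasDerivAt φ).hasDerivWithinAt

/-- Shift invariance of integrals of `2π`-periodic functions. -/
lemma periodic_shift {g : ℝ → ℂ} (hg : Function.Periodic g (2 * π)) (c : ℝ) :
    ∫ t in (0:ℝ)..(2 * π), g (c + t) = ∫ t in (0:ℝ)..(2 * π), g t := by
  rw [intervalIntegral.integral_comp_add_left g c]
  have := hg.intervalIntegral_add_eq c 0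
  simpa using this

/-- Identification of `ℝ × ℝ` with `EuclideanSpace ℝ (Fin 2)`. -/
noncomputable def eucEquiv : (ℝ × ℝ) ≃ᵐ EuclideanSpace ℝ (Fin 2) :=
  (MeasurableEquiv.finTwoArrow).symm.trans (MeasurableEquiv.toLp 2 (Fin 2 → ℝ))

lemma eucEquiv_measurePreserving : MeasurePreserving eucEquiv :=
  ((EuclideanSpace.volume_preserving_symm_measurableEquiv_toLp (Fin 2)).symm).comp
    ((volume_preserving_finTwoArrow ℝ).symm)

lemma eucEquiv_polar (p : ℝ × ℝ) :
    eucEquiv (polarCoord.symm p) = p.1 • unitVec p.2 := by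
  apply PiLp.ext
  intro i
  fin_cases i <;>
    simp [eucEquiv, unitVec, polarCoord_symm_apply, MeasurableEquiv.coe_toLp,
      MeasurableEquiv.finTwoArrow, PiLp.smul_apply, smul_eq_mul]

/-- The singular factor `4 / √(4 - r²)`. -/
noncomputable def sfac (r : ℝ) : ℝ := 4 / Real.sqrt (4 - r ^ 2)

lemma sfac_nonneg (r : ℝ) : 0 ≤ sfac r := by
  unfold sfac; positivity

lemma sfac_measurable : Measurable sfac :=
  measurable_const.div (Real.continuous_sqrt.comp (by fun_prop)).measurable

lemma sqrt_cc (φ : ℝ) (h1 : 0 < φ) (h2 : φ < 2 * π) :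
    Real.sqrt (4 - cc φ ^ 2) = 2 * Real.sin (φ / 2) := by
  have hπ := Real.pi_pos
  have hs : 0 < Real.sin (φ / 2) :=
    Real.sin_pos_of_pos_of_lt_pi (by linarith) (by linarith)
  rw [show 4 - cc φ ^ 2 = (2 * Real.sin (φ / 2)) ^ 2 by
    unfold cc; nlinarith [Real.sin_sq_add_cos_sq (φ / 2)]]
  exact Real.sqrt_sq (by linarith)

end CircleRadonAux

open CircleRadonAux Set

set_option maxHeartbeats 1000000 in
/-- The normal operator `R*R` of the circular transform is convolution against the
kernel `4/(r √(4 − r²))`, `r = |x − y| < 2`. -/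
theorem circleRadon_normal_operator_kernel (f : EuclideanSpace ℝ (Fin 2) → ℂ)
    (hf : Continuous f) (hsupp : HasCompactSupport f) (x : EuclideanSpace ℝ (Fin 2)) :
    (∫ α in (0:ℝ)..(2 * π), ∫ β in (0:ℝ)..(2 * π), f (x + unitVec α + unitVec β)) =
      ∫ y in {y : EuclideanSpace ℝ (Fin 2) | dist x y < 2},
        ((4 / (dist x y * Real.sqrt (4 - dist x y ^ 2)) : ℝ) : ℂ) * f y := by
  have hπ := Real.pi_pos
  have h2π : (0:ℝ) < 2 * π := by linarith
  set G : ℝ → ℂ := fun r => ∫ α in (0:ℝ)..(2 * π), f (x + r • unitVec α) with hGdef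
  set g : ℝ → ℂ := fun r => (2 / Real.sqrt (4 - r ^ 2)) • G r with hgdef
  -- continuity of G
  have hGcont : Continuous G := by
    apply intervalIntegral.continuous_parametric_intervalIntegral_of_continuous'
    exact hf.comp (continuous_const.add ((continuous_fst).smul
      (continuous_unitVec.comp continuous_snd)))
  -- periodicity of the angular integrand
  have hper : ∀ r : ℝ, Function.Periodic (fun α => f (x + r • unitVec α)) (2 * π) :=
    fun r α => by simp only [unitVec_periodic α]
  -- G is even
  have hGeven : ∀ r : ℝ, G (-r) = G r := by
    intro r
    have key : ∀ α : ℝ, x + (-r) • unitVec α = x + r • unitVec (π + α) := by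
      intro α
      rw [add_comm π α, unitVec_add_pi, smul_neg, neg_smul]
    calc G (-r) = ∫ α in (0:ℝ)..(2 * π), f (x + r • unitVec (π + α)) := by
          rw [hGdef]
          exact intervalIntegral.integral_congr fun α _ => by rw [key α]
      _ = G r := periodic_shift (hper r) π
  -- Step A : the inner integral
  have stepA : ∀ α : ℝ, (∫ β in (0:ℝ)..(2 * π), f (x + unitVec α + unitVec β)) =
      ∫ φ in (0:ℝ)..(2 * π), f (x + cc φ • unitVec (α + φ / 2)) := by
    intro α
    have hper2 : Function.Periodic (fun β => f (x + unitVec α + unitVec β)) (2 * π) :=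
      fun β => by simp only [unitVec_periodic β]
    calc (∫ β in (0:ℝ)..(2 * π), f (x + unitVec α + unitVec β))
        = ∫ φ in (0:ℝ)..(2 * π), f (x + unitVec α + unitVec (α + φ)) :=
          (periodic_shift hper2 α).symm
      _ = ∫ φ in (0:ℝ)..(2 * π), f (x + cc φ • unitVec (α + φ / 2)) := by
          apply intervalIntegral.integral_congr
          intro φ _
          show f (x + unitVec α + unitVec (α + φ)) = f (x + cc φ • unitVec (α + φ / 2))
          rw [add_assoc, unitVec_add_unitVec α φ]
          rfl
  -- Fubini and inner shift
  have stepB : (∫ α in (0:ℝ)..(2 * π), ∫ φ in (0:ℝ)..(2 * π),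
        f (x + cc φ • unitVec (α + φ / 2))) =
      ∫ φ in (0:ℝ)..(2 * π), G (cc φ) := by
    have hHc : Continuous (fun p : ℝ × ℝ => f (x + cc p.2 • unitVec (p.1 + p.2 / 2))) := by
      apply hf.comp
      exact continuous_const.add (((continuous_cc.comp continuous_snd)).smul
        (continuous_unitVec.comp (continuous_fst.add (continuous_snd.div_const 2))))
    have hint : Integrable (fun p : ℝ × ℝ => f (x + cc p.2 • unitVec (p.1 + p.2 / 2)))
        ((volume.restrict (Ioc (0:ℝ) (2 * π))).prod (volume.restrict (Ioc (0:ℝ) (2 * π)))) := by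
      rw [Measure.prod_restrict]
      exact (hHc.continuousOn.integrableOn_compact (isCompact_Icc.prod isCompact_Icc)).mono_set
        (prod_mono Ioc_subset_Icc_self Ioc_subset_Icc_self)
    calc (∫ α in (0:ℝ)..(2 * π), ∫ φ in (0:ℝ)..(2 * π), f (x + cc φ • unitVec (α + φ / 2)))
        = ∫ α in Ioc (0:ℝ) (2 * π), ∫ φ in Ioc (0:ℝ) (2 * π),
            f (x + cc φ • unitVec (α + φ / 2)) := by
          simp_rw [intervalIntegral.integral_of_le h2π.le]
      _ = ∫ φ in Ioc (0:ℝ) (2 * π), ∫ α in Ioc (0:ℝ) (2 * π),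
            f (x + cc φ • unitVec (α + φ / 2)) := integral_integral_swap hint
      _ = ∫ φ in (0:ℝ)..(2 * π), ∫ α in (0:ℝ)..(2 * π),
            f (x + cc φ • unitVec (α + φ / 2)) := by
          simp_rw [intervalIntegral.integral_of_le h2π.le]
      _ = ∫ φ in (0:ℝ)..(2 * π), G (cc φ) := by
          apply intervalIntegral.integral_congr
          intro φ _
          have hper3 : Function.Periodic (fun α => f (x + cc φ • unitVec α)) (2 * π) :=
            fun α => by simp only [unitVec_periodic α]
          calc (∫ α in (0:ℝ)..(2 * π), f (x + cc φ • unitVec (α + φ / 2)))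
              = ∫ α in (0:ℝ)..(2 * π), f (x + cc φ • unitVec (φ / 2 + α)) := by
                apply intervalIntegral.integral_congr
                intro a _
                show f (x + cc φ • unitVec (a + φ / 2)) = f (x + cc φ • unitVec (φ / 2 + a))
                rw [add_comm a (φ / 2)]
            _ = G (cc φ) := periodic_shift hper3 (φ / 2)
  -- pointwise identity for the 1-d change of variables
  have hpt : ∀ φ ∈ Ioo (0:ℝ) (2 * π), |(-Real.sin (φ / 2))| • g (cc φ) = G (cc φ) := by
    intro φ hφ
    have hs : 0 < Real.sin (φ / 2) :=
      Real.sin_pos_of_pos_of_lt_pi (by linarith [hφ.1]) (by linarith [hφ.2])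
    rw [hgdef]
    simp only
    rw [sqrt_cc φ hφ.1 hφ.2, smul_smul, abs_neg, abs_of_pos hs]
    rw [show Real.sin (φ / 2) * (2 / (2 * Real.sin (φ / 2))) = 1 by field_simp]
    rw [one_smul]
  -- image of the change of variables
  have himg : cc '' Ioo 0 (2 * π) = Ioo (-2 : ℝ) 2 := by
    rw [cc_image le_rfl le_rfl h2π]
    have e1 : cc (2 * π) = -2 := by
      unfold cc; rw [show 2 * π / 2 = π by ring, Real.cos_pi]; ring
    have e2 : cc 0 = 2 := by unfold cc; norm_num
    rw [e1, e2]
  -- integrability of g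
  have hgint : IntegrableOn g (Ioo (-2:ℝ) 2) := by
    rw [← himg, integrableOn_image_iff_integrableOn_abs_deriv_smul measurableSet_Ioo
      cc_deriv_within cc_injOn]
    apply IntegrableOn.congr_fun ?_ (fun φ hφ => (hpt φ hφ).symm) measurableSet_Ioo
    exact ((hGcont.comp continuous_cc).continuousOn.integrableOn_compact isCompact_Icc).mono_set
      Ioo_subset_Icc_self
  -- left side reduced to the radial integral
  have hLHS : (∫ α in (0:ℝ)..(2 * π), ∫ β in (0:ℝ)..(2 * π), f (x + unitVec α + unitVec β)) =
      ∫ r in Ioo (0:ℝ) 2, (g r + g r) := by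
    have sub1 : Ioc (-2:ℝ) 0 ⊆ Ioo (-2:ℝ) 2 := fun r hr => ⟨hr.1, by linarith [hr.2]⟩
    have sub2 : Ioo (0:ℝ) 2 ⊆ Ioo (-2:ℝ) 2 := fun r hr => ⟨by linarith [hr.1], hr.2⟩
    have disj : Disjoint (Ioc (-2:ℝ) 0) (Ioo (0:ℝ) 2) := by
      rw [Set.disjoint_left]
      rintro r ⟨_, h0⟩ ⟨h0', _⟩
      linarith
    calc (∫ α in (0:ℝ)..(2 * π), ∫ β in (0:ℝ)..(2 * π), f (x + unitVec α + unitVec β))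
        = ∫ α in (0:ℝ)..(2 * π), ∫ φ in (0:ℝ)..(2 * π), f (x + cc φ • unitVec (α + φ / 2)) :=
          intervalIntegral.integral_congr fun α _ => stepA α
      _ = ∫ φ in (0:ℝ)..(2 * π), G (cc φ) := stepB
      _ = ∫ φ in Ioo (0:ℝ) (2 * π), G (cc φ) := by
          rw [intervalIntegral.integral_of_le h2π.le, integral_Ioc_eq_integral_Ioo]
      _ = ∫ φ in Ioo (0:ℝ) (2 * π), |(-Real.sin (φ / 2))| • g (cc φ) := by
          apply setIntegral_congr_fun measurableSet_Ioo
          intro φ hφ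
          exact (hpt φ hφ).symm
      _ = ∫ r in Ioo (-2:ℝ) 2, g r := by
          rw [← himg]
          exact (integral_image_eq_integral_abs_deriv_smul measurableSet_Ioo
            cc_deriv_within cc_injOn g).symm
      _ = (∫ r in Ioc (-2:ℝ) 0, g r) + ∫ r in Ioo (0:ℝ) 2, g r := by
          rw [← Set.Ioc_union_Ioo_eq_Ioo (show (-2:ℝ) ≤ 0 by norm_num)
            (show (0:ℝ) < 2 by norm_num),
            setIntegral_union disj measurableSet_Ioo (hgint.mono_set sub1)
              (hgint.mono_set sub2)]
      _ = (∫ r in Ioo (0:ℝ) 2, g r) + ∫ r in Ioo (0:ℝ) 2, g r := by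
          congr 1
          calc (∫ r in Ioc (-2:ℝ) 0, g r) = ∫ r in Ioo (-2:ℝ) 0, g r :=
                integral_Ioc_eq_integral_Ioo
            _ = ∫ r in Neg.neg '' Ioo (0:ℝ) 2, g r := by
                rw [show Neg.neg '' Ioo (0:ℝ) 2 = Ioo (-2:ℝ) 0 from by
                  rw [Set.image_neg_eq_neg, Set.neg_Ioo]; norm_num]
            _ = ∫ r in Ioo (0:ℝ) 2, |(-1:ℝ)| • g (-r) :=
                integral_image_eq_integral_abs_deriv_smul measurableSet_Ioo
                  (fun r _ => (hasDerivAt_neg r).hasDerivWithinAt) neg_injective.injOn g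
            _ = ∫ r in Ioo (0:ℝ) 2, g r := by
                apply setIntegral_congr_fun measurableSet_Ioo
                intro r _
                have hg : g (-r) = g r := by
                  rw [hgdef]
                  simp only
                  rw [show (-r) ^ 2 = r ^ 2 by ring, hGeven r]
                simpa [hg]
      _ = ∫ r in Ioo (0:ℝ) 2, (g r + g r) :=
          (integral_add (hgint.mono_set sub2) (hgint.mono_set sub2)).symm
  -- right side reduced to the radial integral
  have hRHS : (∫ y in {y : EuclideanSpace ℝ (Fin 2) | dist x y < 2},
        ((4 / (dist x y * Real.sqrt (4 - dist x y ^ 2)) : ℝ) : ℂ) * f y) =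
      ∫ r in Ioo (0:ℝ) 2, sfac r • G r := by
    set K : EuclideanSpace ℝ (Fin 2) → ℂ :=
      fun y => ((4 / (dist x y * Real.sqrt (4 - dist x y ^ 2)) : ℝ) : ℂ) * f y with hK
    have hzero : ∀ y, y ∉ {y : EuclideanSpace ℝ (Fin 2) | dist x y < 2} → K y = 0 := by
      intro y hy
      simp only [mem_setOf_eq, not_lt] at hy
      have h0 : Real.sqrt (4 - dist x y ^ 2) = 0 :=
        Real.sqrt_eq_zero'.mpr (by nlinarith [dist_nonneg (x := x) (y := y)])
      rw [hK]
      simp only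
      rw [h0, mul_zero, div_zero]
      simp
    -- integrability of sfac
    have hsint : IntegrableOn sfac (Ioi (0:ℝ)) := by
      have himg2 : cc '' Ioo 0 π = Ioo (0:ℝ) 2 := by
        rw [cc_image le_rfl (by linarith) hπ]
        have e1 : cc π = 0 := by
          unfold cc; rw [show π / 2 = π / 2 by rfl, Real.cos_pi_div_two]; ring
        have e2 : cc 0 = 2 := by unfold cc; norm_num
        rw [e1, e2]
      have h1 : IntegrableOn sfac (Ioo (0:ℝ) 2) := by
        rw [← himg2, integrableOn_image_iff_integrableOn_abs_deriv_smul measurableSet_Ioo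
          cc_deriv_within (cc_injOn.mono (Set.Ioo_subset_Ioo le_rfl (by linarith)))]
        have hconst : IntegrableOn (fun _ : ℝ => (2:ℝ)) (Ioo (0:ℝ) π) volume :=
          integrableOn_const measure_Ioo_lt_top.ne
        apply IntegrableOn.congr_fun hconst ?_ measurableSet_Ioo
        intro φ hφ
        have hs : 0 < Real.sin (φ / 2) :=
          Real.sin_pos_of_pos_of_lt_pi (by linarith [hφ.1]) (by linarith [hφ.2, hπ])
        show (2:ℝ) = |(-Real.sin (φ / 2))| • sfac (cc φ)
        rw [abs_neg, abs_of_pos hs, smul_eq_mul]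
        unfold sfac
        rw [sqrt_cc φ hφ.1 (by linarith [hφ.2])]
        field_simp
        ring
      have h2 : IntegrableOn sfac (Ici (2:ℝ)) := by
        apply IntegrableOn.congr_fun integrableOn_zero ?_ measurableSet_Ici
        intro r hr
        have : Real.sqrt (4 - r ^ 2) = 0 :=
          Real.sqrt_eq_zero'.mpr (by nlinarith [mem_Ici.mp hr])
        show (0:ℝ) = sfac r
        unfold sfac
        rw [this, div_zero]
      have := h1.union h2
      rwa [Set.Ioo_union_Ici_eq_Ioi (show (0:ℝ) < 2 by norm_num)] at this
    -- integrability of the 2-d integrand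
    have hcont2 : Continuous (fun p : ℝ × ℝ => f (x + p.1 • unitVec p.2)) :=
      hf.comp (continuous_const.add (continuous_fst.smul
        (continuous_unitVec.comp continuous_snd)))
    obtain ⟨y0, hy0⟩ := hf.norm.exists_forall_ge_of_hasCompactSupport hsupp.norm
    have hF2int : IntegrableOn (fun p : ℝ × ℝ => sfac p.1 • f (x + p.1 • unitVec p.2))
        (Ioi (0:ℝ) ×ˢ Ioo (-π) π) := by
      rw [IntegrableOn, Measure.volume_eq_prod, ← Measure.prod_restrict]
      apply Integrable.mono'
        (Integrable.mul_prod hsint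
          (integrableOn_const measure_Ioo_lt_top.ne :
            IntegrableOn (fun _ : ℝ => ‖f y0‖) (Ioo (-π) π) volume))
      · exact ((sfac_measurable.comp measurable_fst).aestronglyMeasurable.smul
          hcont2.measurable.aestronglyMeasurable)
      · apply ae_of_all
        intro p
        rw [norm_smul, Real.norm_eq_abs, abs_of_nonneg (sfac_nonneg _)]
        exact mul_le_mul_of_nonneg_left (hy0 _) (sfac_nonneg _)
    calc (∫ y in {y : EuclideanSpace ℝ (Fin 2) | dist x y < 2}, K y)
        = ∫ y, K y := setIntegral_eq_integral_of_forall_compl_eq_zero hzero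
      _ = ∫ z, K (x + z) := by rw [integral_add_left_eq_self]
      _ = ∫ p : ℝ × ℝ, K (x + eucEquiv p) :=
          (eucEquiv_measurePreserving.integral_comp eucEquiv.measurableEmbedding _).symm
      _ = ∫ p in polarCoord.target, p.1 • K (x + eucEquiv (polarCoord.symm p)) :=
          (integral_comp_polarCoord_symm _).symm
      _ = ∫ p in Ioi (0:ℝ) ×ˢ Ioo (-π) π, sfac p.1 • f (x + p.1 • unitVec p.2) := by
          rw [polarCoord_target]
          apply setIntegral_congr_fun (measurableSet_Ioi.prod measurableSet_Ioo)
          intro p hp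
          have hr : 0 < p.1 := hp.1
          show p.1 • K (x + eucEquiv (polarCoord.symm p)) = sfac p.1 • f (x + p.1 • unitVec p.2)
          rw [eucEquiv_polar]
          have hd : dist x (x + p.1 • unitVec p.2) = p.1 := by
            rw [dist_eq_norm, show x - (x + p.1 • unitVec p.2) = -(p.1 • unitVec p.2) by abel,
              norm_neg, norm_smul, norm_unitVec, Real.norm_eq_abs, abs_of_pos hr, mul_one]
          rw [hK]
          simp only
          rw [hd, Complex.real_smul, Complex.real_smul, ← mul_assoc, ← Complex.ofReal_mul]
          congr 2
          unfold sfac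
          rcases eq_or_ne (Real.sqrt (4 - p.1 ^ 2)) 0 with h | h
          · rw [h]
            simp
          · field_simp
      _ = ∫ r in Ioi (0:ℝ), ∫ θ in Ioo (-π) π, sfac r • f (x + r • unitVec θ) :=
          setIntegral_prod _ hF2int
      _ = ∫ r in Ioi (0:ℝ), sfac r • G r := by
          apply setIntegral_congr_fun measurableSet_Ioi
          intro r _
          show (∫ θ in Ioo (-π) π, sfac r • f (x + r • unitVec θ)) = sfac r • G r
          rw [integral_smul]
          congr 1
          rw [← integral_Ioc_eq_integral_Ioo,
            ← intervalIntegral.integral_of_le (show -π ≤ π by linarith)]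
          have hsh := (hper r).intervalIntegral_add_eq (-π) 0
          rw [show -π + 2 * π = π by ring, zero_add] at hsh
          exact hsh
      _ = ∫ r in Ioo (0:ℝ) 2, sfac r • G r := by
          apply setIntegral_eq_of_subset_of_forall_diff_eq_zero measurableSet_Ioi
            (fun r hr => hr.1)
          intro r hr
          have hr0 : (0:ℝ) < r := hr.1
          have h2r : 2 ≤ r := by
            by_contra h
            push_neg at h
            exact hr.2 ⟨hr0, h⟩
          have h0 : Real.sqrt (4 - r ^ 2) = 0 := Real.sqrt_eq_zero'.mpr (by nlinarith)
          show sfac r • G r = 0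
          unfold sfac
          rw [h0, div_zero, zero_smul]
  rw [hLHS, hRHS]
  apply setIntegral_congr_fun measurableSet_Ioo
  intro r _
  rw [hgdef]
  simp only
  rw [← add_smul, sfac]
  congr 1
  ring
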